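/- Under uniform squeezing, a universal-covered bounded domain is Carathéodory measure hyperbolic: if D ⊂ ℂⁿ is a bounded domain covering a compact complex manifold, then constants 0 < a < b from the uniform squeezing property give v^C_D(p) ≥ 1/b^{2n} > 0 and v^K_D(p) ≤ 1/a^{2n} < ∞ at every point p ∈ D (computed in squeezing coordinates centered at p). -/

import Mathlib

open Metric Complex
noncomputable section
abbrev En (n : ℕ) := EuclideanSpace ℂ (Fin n)
noncomputable def jacDet {n : ℕ} (f : En n → En n) (p : En n) : ℂ :=
  LinearMap.det ((fderiv ℂ f p).toLinearMap)
noncomputable def vC {n : ℕ} (M : Set (En n)) (p : En n) : ENNReal :=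
  ⨆ f ∈ {f : En n → En n | DifferentiableOn ℂ f M ∧ Set.MapsTo f M (ball 0 1) ∧ f p = 0},
    ENNReal.ofReal (‖jacDet f p‖ ^ 2)
noncomputable def vK {n : ℕ} (M : Set (En n)) (p : En n) : ENNReal :=
  ⨅ f ∈ {f : En n → En n | DifferentiableOn ℂ f (ball 0 1) ∧ Set.MapsTo f (ball 0 1) M ∧ f 0 = p},
    (ENNReal.ofReal (‖jacDet f 0‖ ^ 2))⁻¹
noncomputable def leviForm {E : Type*} [NormedAddCommGroup E] [NormedSpace ℂ E] (u : E → ℝ) (z ζ : E) : ℝ :=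
  (1/4) * ((iteratedFDeriv ℝ 2 u z) ![ζ, ζ] + (iteratedFDeriv ℝ 2 u z) ![Complex.I • ζ, Complex.I • ζ])


lemma jacDet_smul_map {n : ℕ} (c : ℂ) (p : En n) :
    jacDet (fun z : En n => c • z) p = c ^ n := by
  have h : (fun z : En n => c • z) = ⇑(c • ContinuousLinearMap.id ℂ (En n)) := rfl
  rw [jacDet, h, ContinuousLinearMap.fderiv]
  have h2 : (c • ContinuousLinearMap.id ℂ (En n)).toLinearMap
      = c • (LinearMap.id : En n →ₗ[ℂ] En n) := rfl
  rw [h2, LinearMap.det_smul, LinearMap.det_id, finrank_euclideanSpace_fin, mul_one]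

lemma norm_sq_smul_jac {n : ℕ} (c : ℝ) (hc : 0 < c) (p : En n) :
    ‖jacDet (fun z : En n => (c : ℂ) • z) p‖ ^ 2 = c ^ (2 * n) := by
  rw [jacDet_smul_map, norm_pow, Complex.norm_real, Real.norm_eq_abs, abs_of_pos hc,
    ← pow_mul, mul_comm n 2]

theorem squeezing_domain_measure_hyperbolic {n : ℕ} (D : Set (En n)) (hD : IsOpen D)
    (hne : D.Nonempty) (hbd : Bornology.IsBounded D)
    (G : Set (En n → En n))
    (hG : ∀ g ∈ G, DifferentiableOn ℂ g D ∧ Set.BijOn g D D ∧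
      ∃ ginv : En n → En n, DifferentiableOn ℂ ginv D ∧ Set.BijOn ginv D D ∧
        Set.EqOn (ginv ∘ g) id D)
    (A : Set (En n)) (hA : IsCompact A) (hAD : A ⊆ D)
    (hquot : ∀ x ∈ D, ∃ g ∈ G, g x ∈ A) :
    ∃ a b : ℝ, 0 < a ∧ a < b ∧ ∀ p ∈ D, ∃ φ : En n → En n,
      DifferentiableOn ℂ φ D ∧ Set.InjOn φ D ∧ φ p = 0 ∧
      ball 0 a ⊆ φ '' D ∧ φ '' D ⊆ ball 0 b ∧
      ENNReal.ofReal (1 / b ^ (2 * n)) ≤ vC (φ '' D) 0 ∧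
      vK (φ '' D) 0 ≤ ENNReal.ofReal (1 / a ^ (2 * n)) := by
  obtain ⟨r, hr, hthick⟩ := hA.exists_thickening_subset_open hD hAD
  obtain ⟨R, hR, hDR⟩ := hbd.subset_closedBall_lt 0 0
  refine ⟨r, 2 * R + r + 1, hr, by linarith, fun p hp => ?_⟩
  set b : ℝ := 2 * R + r + 1 with hb
  have hb0 : (0:ℝ) < b := by positivity
  obtain ⟨g, hgG, hgA⟩ := hquot p hp
  obtain ⟨hgdiff, hgbij, -⟩ := hG g hgG
  refine ⟨fun z => g z - g p, ?_, ?_, sub_self _, ?_, ?_, ?_, ?_⟩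
  · exact hgdiff.sub_const _
  · intro x hx y hy hxy
    exact hgbij.injOn hx hy (by simpa [sub_left_inj] using hxy)
  · -- ball 0 r ⊆ image
    intro z hz
    have hzD : z + g p ∈ D := by
      apply hthick
      apply Metric.ball_subset_thickening hgA r
      simpa [Metric.mem_ball, dist_eq_norm] using (by simpa [Metric.mem_ball, dist_eq_norm] using hz : ‖z‖ < r)
    obtain ⟨w, hw, hww⟩ := hgbij.surjOn hzD
    exact ⟨w, hw, by show g w - g p = z; rw [hww]; abel⟩
  · -- image ⊆ ball 0 b
    rintro _ ⟨z, hz, rfl⟩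
    have h1 : ‖g z‖ ≤ R := by
      simpa [Metric.mem_closedBall, dist_eq_norm] using hDR (hgbij.mapsTo hz)
    have h2 : ‖g p‖ ≤ R := by
      simpa [Metric.mem_closedBall, dist_eq_norm] using hDR (hgbij.mapsTo hp)
    have := norm_sub_le (g z) (g p)
    simp only [Metric.mem_ball, dist_eq_norm, sub_zero]
    linarith
  · -- vC lower bound
    set M : Set (En n) := (fun z => g z - g p) '' D with hM
    have hMb : M ⊆ ball 0 b := by
      rintro _ ⟨z, hz, rfl⟩
      have h1 : ‖g z‖ ≤ R := by
        simpa [Metric.mem_closedBall, dist_eq_norm] using hDR (hgbij.mapsTo hz)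
      have h2 : ‖g p‖ ≤ R := by
        simpa [Metric.mem_closedBall, dist_eq_norm] using hDR (hgbij.mapsTo hp)
      have := norm_sub_le (g z) (g p)
      simp only [Metric.mem_ball, dist_eq_norm, sub_zero]
      linarith
    set f : En n → En n := fun z => ((b⁻¹ : ℝ) : ℂ) • z with hf
    have hfmem : f ∈ {f : En n → En n | DifferentiableOn ℂ f M ∧
        Set.MapsTo f M (ball 0 1) ∧ f 0 = 0} := by
      refine ⟨(by rw [hf]; fun_prop), ?_, by simp [hf]⟩
      intro z hz
      have hzb : ‖z‖ < b := by
        simpa [Metric.mem_ball, dist_eq_norm] using hMb hz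
      simp only [hf, Metric.mem_ball, dist_eq_norm, sub_zero, norm_smul,
        Complex.norm_real, Real.norm_eq_abs, abs_of_pos (inv_pos.mpr hb0)]
      calc b⁻¹ * ‖z‖ < b⁻¹ * b := by
            exact mul_lt_mul_of_pos_left hzb (inv_pos.mpr hb0)
        _ = 1 := inv_mul_cancel₀ hb0.ne'
    have key : ENNReal.ofReal (1 / b ^ (2 * n))
        = ENNReal.ofReal (‖jacDet f 0‖ ^ 2) := by
      rw [hf, norm_sq_smul_jac b⁻¹ (inv_pos.mpr hb0), inv_pow, one_div]
    rw [key]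
    exact le_iSup₂ (f := fun f _ => ENNReal.ofReal (‖jacDet f 0‖ ^ 2)) f hfmem
  · -- vK upper bound
    set M : Set (En n) := (fun z => g z - g p) '' D with hM
    have hball : ball (0 : En n) r ⊆ M := by
      intro z hz
      have hzD : z + g p ∈ D := by
        apply hthick
        apply Metric.ball_subset_thickening hgA r
        simpa [Metric.mem_ball, dist_eq_norm] using (by simpa [Metric.mem_ball, dist_eq_norm] using hz : ‖z‖ < r)
      obtain ⟨w, hw, hww⟩ := hgbij.surjOn hzD
      exact ⟨w, hw, by show g w - g p = z; rw [hww]; abel⟩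
    set f : En n → En n := fun z => ((r : ℝ) : ℂ) • z with hf
    have hfmem : f ∈ {f : En n → En n | DifferentiableOn ℂ f (ball 0 1) ∧
        Set.MapsTo f (ball 0 1) M ∧ f 0 = 0} := by
      refine ⟨(by rw [hf]; fun_prop), ?_, by simp [hf]⟩
      intro z hz
      apply hball
      have hz1 : ‖z‖ < 1 := by simpa [Metric.mem_ball, dist_eq_norm] using hz
      simp only [hf, Metric.mem_ball, dist_eq_norm, sub_zero, norm_smul,
        Complex.norm_real, Real.norm_eq_abs, abs_of_pos hr]
      calc r * ‖z‖ < r * 1 := mul_lt_mul_of_pos_left hz1 hr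
        _ = r := mul_one r
    have key : (ENNReal.ofReal (‖jacDet f 0‖ ^ 2))⁻¹
        = ENNReal.ofReal (1 / r ^ (2 * n)) := by
      rw [hf, norm_sq_smul_jac r hr, one_div, ENNReal.ofReal_inv_of_pos (by positivity)]
    calc vK M 0 ≤ (ENNReal.ofReal (‖jacDet f 0‖ ^ 2))⁻¹ :=
          iInf₂_le (f := fun f _ => (ENNReal.ofReal (‖jacDet f 0‖ ^ 2))⁻¹) f hfmem
      _ = ENNReal.ofReal (1 / r ^ (2 * n)) := key
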